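/- arXiv:2010.14474 — 6 statements merged into one kernel-verified Lean document; each statement's English description precedes it below -/
import Mathlib

section
/- Let $n \ge 1$ and let $a_1, \ldots, a_n, b$ be nonnegative integers with $a_i \ge b$ for all $i$. Let $H$ be the $n \times n$ matrix with diagonal entries $H_{ii} = a_i$ and off-diagonal entries $H_{ij} = b$. Let $J_H \subseteq R = K[x_1,\ldots,x_n]$ be the monomial ideal generated by $x_t^{a_t}$ for $1 \le t \le n$ and by $x_i^{a_i - b} x_j^{a_j - b}$ for $1 \le i < j \le n$. Then $\dim_K(R/J_H) = \det H$. -/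
open MvPolynomial

open Finset Matrix in
private lemma det_aux : ∀ (n : ℕ) (d : Fin n → ℤ) (b : ℤ),
    Matrix.det (Matrix.of fun i j => if i = j then d i + b else b)
      = ∏ i, d i + ∑ i : Fin n, ∏ j, (if j = i then b else d j) := by
  intro n
  induction n with
  | zero => intro d b; simp [Matrix.det_fin_zero]
  | succ n ih =>
    intro d b
    set M : Matrix (Fin (n+1)) (Fin (n+1)) ℤ :=
      Matrix.of fun i j => if i = j then d i + b else b with hM
    have hrow : M = M.updateRow 0 ((fun j => if (0:Fin (n+1)) = j then d 0 else 0) + fun _ => b) := by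
      ext i j
      rcases eq_or_ne i 0 with rfl | hi
      · simp [hM, Matrix.updateRow_self, Pi.add_apply]
        split <;> ring
      · rw [Matrix.updateRow_ne hi]
    rw [hrow, Matrix.det_updateRow_add]
    -- first summand
    have h1 : (M.updateRow 0 fun j => if (0:Fin (n+1)) = j then d 0 else 0).det
        = d 0 * (∏ i : Fin n, d i.succ + ∑ i : Fin n, ∏ j : Fin n, (if j = i then b else d j.succ)) := by
      rw [Matrix.det_succ_row_zero]
      rw [Finset.sum_eq_single 0]
      · simp only [Matrix.updateRow_self, Fin.val_zero, pow_zero, one_mul, if_pos rfl, if_true]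
        have hsub : ((M.updateRow 0 fun j => if (0:Fin (n+1)) = j then d 0 else 0).submatrix
            Fin.succ (Fin.succAbove 0))
            = Matrix.of fun i j : Fin n => if i = j then d i.succ + b else b := by
          ext i j
          rw [Matrix.submatrix_apply, Matrix.updateRow_ne (Fin.succ_ne_zero i), Fin.succAbove_zero]
          simp [hM, Fin.succ_inj]
        rw [hsub, ih]
      · intro j _ hj
        rw [Matrix.updateRow_self]
        simp [if_neg (Ne.symm hj) ]
      · simp
    -- second summand
    have h2 : (M.updateRow 0 fun _ => b).det = b * ∏ i : Fin n, d i.succ := by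
      have := Matrix.det_eq_of_forall_row_eq_smul_add_const
        (A := M.updateRow 0 fun _ => b)
        (B := Matrix.of fun i j : Fin (n+1) => if i = 0 then b else if i = j then d i else 0)
        (fun i => if i = 0 then 0 else 1) 0 (if_pos rfl) ?_
      · rw [this, Matrix.det_succ_column_zero, Finset.sum_eq_single 0]
        · simp only [Matrix.of_apply, if_pos rfl, Fin.val_zero, pow_zero, one_mul, if_true]
          have hsub : ((Matrix.of fun i j : Fin (n+1) => if i = 0 then b else if i = j then d i else 0).submatrix
              (Fin.succAbove 0) Fin.succ) = Matrix.diagonal (fun i : Fin n => d i.succ) := by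
            ext i j
            rw [Matrix.submatrix_apply, Fin.succAbove_zero]
            simp [Matrix.diagonal, Fin.succ_ne_zero i, Fin.succ_inj]
          rw [hsub, Matrix.det_diagonal]
        · intro i _ hi
          rw [Matrix.of_apply, if_neg hi, if_neg hi]
          ring
        · simp
      · intro i j
        rcases eq_or_ne i 0 with rfl | hi
        · simp
        · rw [Matrix.updateRow_ne hi]
          simp only [hM, Matrix.of_apply, if_neg hi, if_pos rfl, if_true]
          split <;> simp
    rw [h1, h2]
    rw [Fin.prod_univ_succ, Fin.sum_univ_succ]
    have e0 : ∏ j : Fin (n+1), (if j = 0 then b else d j) = b * ∏ i : Fin n, d i.succ := by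
      rw [Fin.prod_univ_succ]
      simp [Fin.succ_ne_zero]
    have esucc : ∀ i : Fin n, ∏ j : Fin (n+1), (if j = i.succ then b else d j)
        = d 0 * ∏ j : Fin n, (if j = i then b else d j.succ) := by
      intro i
      rw [Fin.prod_univ_succ]
      simp [Fin.succ_inj, (Fin.succ_ne_zero i).symm]
    rw [e0]
    simp only [esucc]
    rw [← Finset.mul_sum]
    ring

open Finset in
open Classical in
private lemma count_aux (n : ℕ) (a : Fin n → ℕ) (b : ℕ) (ha : ∀ i, b ≤ a i) :
    ((Fintype.piFinset fun t => Finset.range (a t)).filter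
        (fun f => ∀ i j : Fin n, i < j → ¬(a i - b ≤ f i ∧ a j - b ≤ f j))).card
      = ∏ i, (a i - b) + ∑ i : Fin n, ∏ j, (if j = i then b else a j - b) := by
  classical
  set d : Fin n → ℕ := fun t => a t - b with hd
  set F0 : Finset (Fin n → ℕ) := Fintype.piFinset fun t => Finset.range (d t) with hF0
  set Fi : Fin n → Finset (Fin n → ℕ) :=
    fun i => Fintype.piFinset fun t => if t = i then Finset.Ico (d i) (a i) else Finset.range (d t)
    with hFi
  have key : ((Fintype.piFinset fun t => Finset.range (a t)).filter
        (fun f => ∀ i j : Fin n, i < j → ¬(a i - b ≤ f i ∧ a j - b ≤ f j)))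
      = F0 ∪ Finset.univ.biUnion Fi := by
    ext f
    simp only [Finset.mem_filter, Fintype.mem_piFinset, Finset.mem_range, Finset.mem_union,
      Finset.mem_biUnion, Finset.mem_univ, true_and, hF0, hFi]
    constructor
    · rintro ⟨hbound, hpair⟩
      by_cases h0 : ∀ t, f t < d t
      · exact Or.inl h0
      · push_neg at h0
        obtain ⟨i, hi⟩ := h0
        refine Or.inr ⟨i, fun t => ?_⟩
        rcases eq_or_ne t i with rfl | ht
        · rw [if_pos rfl, Finset.mem_Ico]
          exact ⟨hi, hbound t⟩
        · rw [if_neg ht, Finset.mem_range]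
          by_contra hc
          push_neg at hc
          rcases lt_trichotomy t i with h | h | h
          · exact hpair t i h ⟨hc, hi⟩
          · exact ht h
          · exact hpair i t h ⟨hi, hc⟩
    · rintro (h0 | ⟨i, hi⟩)
      · refine ⟨fun t => lt_of_lt_of_le (h0 t) (Nat.sub_le _ _), fun i j _ hc => ?_⟩
        exact absurd hc.1 (Nat.not_le.mpr (h0 i))
      · constructor
        · intro t
          have h := hi t
          rcases eq_or_ne t i with rfl | ht
          · rw [if_pos rfl, Finset.mem_Ico] at h
            exact h.2
          · rw [if_neg ht, Finset.mem_range] at h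
            exact lt_of_lt_of_le h (Nat.sub_le _ _)
        · intro s t hst hc
          have hs := hi s
          have htt := hi t
          have hne : s ≠ t := ne_of_lt hst
          rcases eq_or_ne s i with rfl | hsi
          · rw [if_neg hne.symm, Finset.mem_range] at htt
            exact absurd hc.2 (Nat.not_le.mpr htt)
          · rw [if_neg hsi, Finset.mem_range] at hs
            exact absurd hc.1 (Nat.not_le.mpr hs)
  rw [key]
  have hdisj : Disjoint F0 (Finset.univ.biUnion Fi) := by
    rw [Finset.disjoint_left]
    intro f hf hf'
    simp only [hF0, Fintype.mem_piFinset, Finset.mem_range] at hf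
    simp only [Finset.mem_biUnion, Finset.mem_univ, true_and, hFi] at hf'
    obtain ⟨i, hi⟩ := hf'
    have h := (Fintype.mem_piFinset.mp hi) i
    rw [if_pos rfl, Finset.mem_Ico] at h
    exact absurd h.1 (Nat.not_le.mpr (hf i))
  rw [Finset.card_union_of_disjoint hdisj]
  have hpd : ∀ i ∈ Finset.univ, ∀ j ∈ Finset.univ, i ≠ j → Disjoint (Fi i) (Fi j) := by
    intro i _ j _ hij
    rw [Finset.disjoint_left]
    intro f hf hf'
    have h1 := (Fintype.mem_piFinset.mp hf) i
    have h2 := (Fintype.mem_piFinset.mp hf') i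
    rw [if_pos rfl, Finset.mem_Ico] at h1
    rw [if_neg hij, Finset.mem_range] at h2
    exact absurd h1.1 (Nat.not_le.mpr h2)
  rw [Finset.card_biUnion hpd]
  congr 1
  · rw [hF0, Fintype.card_piFinset]
    simp
  · refine Finset.sum_congr rfl fun i _ => ?_
    rw [hFi, Fintype.card_piFinset]
    refine Finset.prod_congr rfl fun j _ => ?_
    rcases eq_or_ne j i with rfl | hj
    · simp [hd, Nat.card_Ico, Nat.sub_sub_self (ha j)]
    · simp [hd, if_neg hj]

private lemma pair_le_iff {n : ℕ} {i j : Fin n} (hij : i ≠ j) (c c' : ℕ) (e : Fin n →₀ ℕ) :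
    Finsupp.single i c + Finsupp.single j c' ≤ e ↔ c ≤ e i ∧ c' ≤ e j := by
  rw [Finsupp.le_def]
  constructor
  · intro h
    constructor
    · have := h i
      simpa [Finsupp.single_apply, hij.symm] using this
    · have := h j
      simpa [Finsupp.single_apply, hij] using this
  · rintro ⟨h1, h2⟩ k
    simp only [Finsupp.add_apply, Finsupp.single_apply]
    by_cases hik : i = k
    · subst hik
      rw [if_pos rfl, if_neg (Ne.symm hij)]
      omega
    · rw [if_neg hik]
      by_cases hjk : j = k
      · subst hjk
        rw [if_pos rfl]
        omega
      · rw [if_neg hjk]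
        omega

theorem stmt2 (K : Type*) [Field K] (n : ℕ) (hn : 1 ≤ n) (a : Fin n → ℕ) (b : ℕ)
    (ha : ∀ i, b ≤ a i)
    (H : Matrix (Fin n) (Fin n) ℤ)
    (hH : ∀ i j, H i j = if i = j then (a i : ℤ) else (b : ℤ))
    (J : Ideal (MvPolynomial (Fin n) K))
    (hJ : J = Ideal.span
      ((Set.range fun t => (X t : MvPolynomial (Fin n) K) ^ a t) ∪
        {m | ∃ i j : Fin n, i < j ∧ m = X i ^ (a i - b) * X j ^ (a j - b)})) :
    (Module.finrank K (MvPolynomial (Fin n) K ⧸ J) : ℤ) = H.det := by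
  classical
  set G : Set (Fin n →₀ ℕ) :=
    (Set.range fun t => Finsupp.single t (a t)) ∪
      {m | ∃ i j : Fin n, i < j ∧ m = Finsupp.single i (a i - b) + Finsupp.single j (a j - b)}
    with hG
  have hJ2 : J = Ideal.span ((fun s => MvPolynomial.monomial s (1:K)) '' G) := by
    have h1 : (Set.range fun t => (X t : MvPolynomial (Fin n) K) ^ a t)
        = (fun s => MvPolynomial.monomial s (1:K)) ''
          (Set.range fun t => Finsupp.single t (a t)) := by
      rw [← Set.range_comp]
      exact congrArg Set.range (funext fun t => MvPolynomial.X_pow_eq_monomial)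
    have h2 : {m | ∃ i j : Fin n, i < j ∧ m
          = (X i : MvPolynomial (Fin n) K) ^ (a i - b) * X j ^ (a j - b)}
        = (fun s => MvPolynomial.monomial s (1:K)) ''
          {m | ∃ i j : Fin n, i < j ∧
            m = Finsupp.single i (a i - b) + Finsupp.single j (a j - b)} := by
      ext m
      simp only [Set.mem_setOf_eq, Set.mem_image]
      constructor
      · rintro ⟨i, j, hij, rfl⟩
        exact ⟨_, ⟨i, j, hij, rfl⟩, by
          rw [MvPolynomial.X_pow_eq_monomial, MvPolynomial.X_pow_eq_monomial,
            MvPolynomial.monomial_mul, one_mul]⟩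
      · rintro ⟨s, ⟨i, j, hij, rfl⟩, rfl⟩
        exact ⟨i, j, hij, by
          rw [MvPolynomial.X_pow_eq_monomial, MvPolynomial.X_pow_eq_monomial,
            MvPolynomial.monomial_mul, one_mul]⟩
    rw [hJ, hG, Set.image_union, h1, h2]
  have hmem : ∀ p : MvPolynomial (Fin n) K, p ∈ J ↔ ∀ e ∈ p.support, ∃ g ∈ G, g ≤ e := by
    intro p; rw [hJ2]; exact MvPolynomial.mem_ideal_span_monomial_image
  set B : Set (Fin n →₀ ℕ) := {e | ∃ g ∈ G, g ≤ e} with hB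
  set e0 := (MvPolynomial.basisMonomials (Fin n) K).repr with he0
  have hmap : (J.restrictScalars K).map e0.toLinearMap = Finsupp.supported K K B := by
    ext f
    rw [Submodule.mem_map_equiv, Finsupp.mem_supported, Submodule.restrictScalars_mem, hmem]
    have hsupp : (e0.symm f).support = f.support := rfl
    rw [hsupp]
    exact ⟨fun h x hx => h x hx, fun h x hx => h hx⟩
  -- the quotient is identified with functions supported on the complement of B
  have hc : IsCompl (Finsupp.supported K K B) (Finsupp.supported K K Bᶜ) := by
    constructor
    · exact Finsupp.disjoint_supported_supported disjoint_compl_right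
    · rw [codisjoint_iff, ← Finsupp.supported_union, Set.union_compl_self,
        Finsupp.supported_univ]
  have hfr : Module.finrank K (MvPolynomial (Fin n) K ⧸ J)
      = Module.finrank K (Finsupp.supported K K Bᶜ) := by
    have e1 := (Submodule.Quotient.restrictScalarsEquiv K J).symm
    have e2 := Submodule.Quotient.equiv (J.restrictScalars K) (Finsupp.supported K K B) e0 hmap
    have e3 := Submodule.quotientEquivOfIsCompl _ _ hc
    exact ((e1.trans e2).trans e3).finrank_eq
  -- identify the complement with a finset of bounded functions
  set Fset : Finset (Fin n → ℕ) := (Fintype.piFinset fun t => Finset.range (a t)).filter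
      (fun f => ∀ i j : Fin n, i < j → ¬(a i - b ≤ f i ∧ a j - b ≤ f j)) with hFset
  have hB' : ∀ e : Fin n →₀ ℕ, e ∈ B ↔
      ((∃ t, a t ≤ e t) ∨ ∃ i j : Fin n, i < j ∧ (a i - b ≤ e i ∧ a j - b ≤ e j)) := by
    intro e
    constructor
    · rintro ⟨g, hg, hge⟩
      rcases hg with ⟨t, rfl⟩ | ⟨i, j, hij, rfl⟩
      · exact Or.inl ⟨t, Finsupp.single_le_iff.mp hge⟩
      · exact Or.inr ⟨i, j, hij, (pair_le_iff (ne_of_lt hij) _ _ e).mp hge⟩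
    · rintro (⟨t, ht⟩ | ⟨i, j, hij, h⟩)
      · exact ⟨_, Or.inl ⟨t, rfl⟩, Finsupp.single_le_iff.mpr ht⟩
      · exact ⟨_, Or.inr ⟨i, j, hij, rfl⟩, (pair_le_iff (ne_of_lt hij) _ _ e).mpr h⟩
  have hTF : ∀ e : Fin n →₀ ℕ, e ∈ Bᶜ ↔ Finsupp.equivFunOnFinite e ∈ Fset := by
    intro e
    rw [Set.mem_compl_iff, hB' e, hFset, Finset.mem_filter, Fintype.mem_piFinset, not_or]
    have happ : ∀ t, Finsupp.equivFunOnFinite e t = e t := fun _ => rfl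
    constructor
    · rintro ⟨h1, h2⟩
      refine ⟨fun t => ?_, fun i j hij hcon => h2 ⟨i, j, hij, by
        rw [happ i, happ j] at hcon; exact hcon⟩⟩
      rw [Finset.mem_range, happ t]
      by_contra hcon
      exact h1 ⟨t, Nat.le_of_not_lt hcon⟩
    · rintro ⟨h1, h2⟩
      constructor
      · rintro ⟨t, ht⟩
        have := h1 t
        rw [Finset.mem_range, happ t] at this
        exact absurd ht (Nat.not_le.mpr this)
      · rintro ⟨i, j, hij, hcon⟩
        exact h2 i j hij ⟨by rw [happ i]; exact hcon.1, by rw [happ j]; exact hcon.2⟩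
  have heqv : ↥(Bᶜ) ≃ {f // f ∈ Fset} := Equiv.subtypeEquiv Finsupp.equivFunOnFinite hTF
  have hcard : Module.finrank K (MvPolynomial (Fin n) K ⧸ J) = Fset.card := by
    rw [hfr]
    have e4 := Finsupp.supportedEquivFinsupp (M := K) (R := K) (Bᶜ)
    have e5 : (↥(Bᶜ) →₀ K) ≃ₗ[K] ({f // f ∈ Fset} →₀ K) := Finsupp.domLCongr heqv
    have e6 := Finsupp.linearEquivFunOnFinite K K {f // f ∈ Fset}
    rw [((e4.trans e5).trans e6).finrank_eq, Module.finrank_fintype_fun_eq_card,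
      Fintype.card_coe]
  rw [hcard, count_aux n a b ha]
  have hHeq : H = Matrix.of fun i j =>
      if i = j then ((a i - b : ℕ) : ℤ) + (b : ℤ) else (b : ℤ) := by
    ext i j
    rw [hH, Matrix.of_apply]
    split
    · have hb := ha i
      omega
    · rfl
  rw [hHeq, det_aux]
  push_cast
  ring
end

section
/- Let $R = K[x_1,\ldots,x_n]$, let $a_i \ge b \ge 1$ with $a_1 > b$, set $r = a_1 - b$, and let $J = \langle x_l^{a_l}, x_i^{a_i - b} x_j^{a_j - b} : 1 \le l \le n,\ 1 \le i < j \le n \rangle$. Then the colon ideal $(J : x_1^r)$ equals the ideal $\langle x_1^{b}, x_2^{a_2 - b}, \ldots, x_n^{a_n - b} \rangle$. -/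
open MvPolynomial

/-- The key combinatorial lemma about exponent vectors. -/
lemma stmt5_key (n : ℕ) (a : Fin (n + 1) → ℕ) (b : ℕ)
    (hb : 1 ≤ b) (ha : ∀ i, b ≤ a i) (m : Fin (n + 1) →₀ ℕ) :
    (∃ s ∈ ((Set.range fun l => Finsupp.single l (a l)) ∪
        {d | ∃ i j : Fin (n + 1), i < j ∧
          d = Finsupp.single i (a i - b) + Finsupp.single j (a j - b)}),
        s ≤ m + Finsupp.single 0 (a 0 - b)) ↔
      (∃ t ∈ ({Finsupp.single (0 : Fin (n + 1)) b} ∪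
        {d | ∃ i : Fin (n + 1), i ≠ 0 ∧ d = Finsupp.single i (a i - b)}),
        t ≤ m) := by
  constructor
  · rintro ⟨s, hs | hs, hle⟩
    · obtain ⟨l, rfl⟩ := hs
      rcases eq_or_ne l 0 with rfl | hl
      · refine ⟨Finsupp.single 0 b, Or.inl rfl, ?_⟩
        rw [Finsupp.single_le_iff] at hle ⊢
        rw [Finsupp.add_apply, Finsupp.single_eq_same] at hle
        have := ha 0
        omega
      · refine ⟨Finsupp.single l (a l - b), Or.inr ⟨l, hl, rfl⟩, ?_⟩
        rw [Finsupp.single_le_iff] at hle ⊢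
        rw [Finsupp.add_apply, Finsupp.single_eq_of_ne' (Ne.symm hl)] at hle
        omega
    · obtain ⟨i, j, hij, rfl⟩ := hs
      have hj0 : j ≠ 0 := by
        intro h; subst h; exact absurd hij (by simp [Fin.lt_iff_val_lt_val])
      rcases eq_or_ne i 0 with rfl | hi0
      · refine ⟨Finsupp.single j (a j - b), Or.inr ⟨j, hj0, rfl⟩, ?_⟩
        have hle' := Finsupp.le_def.mp hle j
        rw [Finsupp.add_apply, Finsupp.add_apply, Finsupp.single_eq_same,
          Finsupp.single_eq_of_ne' (Ne.symm hj0)] at hle'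
        rw [Finsupp.single_le_iff]
        omega
      · refine ⟨Finsupp.single i (a i - b), Or.inr ⟨i, hi0, rfl⟩, ?_⟩
        have hle' := Finsupp.le_def.mp hle i
        rw [Finsupp.add_apply, Finsupp.add_apply, Finsupp.single_eq_same,
          Finsupp.single_eq_of_ne' hij.ne', Finsupp.single_eq_of_ne' (Ne.symm hi0)] at hle'
        rw [Finsupp.single_le_iff]
        omega
  · rintro ⟨t, ht | ht, hle⟩
    · subst ht
      refine ⟨Finsupp.single 0 (a 0), Or.inl ⟨0, rfl⟩, ?_⟩
      rw [Finsupp.single_le_iff] at hle ⊢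
      rw [Finsupp.add_apply, Finsupp.single_eq_same]
      have := ha 0
      omega
    · obtain ⟨i, hi0, rfl⟩ := ht
      have h0i : (0 : Fin (n + 1)) < i := Fin.pos_of_ne_zero hi0
      refine ⟨Finsupp.single 0 (a 0 - b) + Finsupp.single i (a i - b),
        Or.inr ⟨0, i, h0i, rfl⟩, ?_⟩
      rw [Finsupp.single_le_iff] at hle
      intro k
      rw [Finsupp.add_apply, Finsupp.add_apply]
      rcases eq_or_ne k 0 with rfl | hk0
      · rw [Finsupp.single_eq_same, Finsupp.single_eq_of_ne' hi0]
        omega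
      · rw [Finsupp.single_eq_of_ne' (Ne.symm hk0)]
        rcases eq_or_ne k i with rfl | hki
        · rw [Finsupp.single_eq_same]; omega
        · rw [Finsupp.single_eq_of_ne' (Ne.symm hki)]; omega

theorem stmt5 (K : Type*) [Field K] (n : ℕ) (a : Fin (n + 1) → ℕ) (b : ℕ)
    (hb : 1 ≤ b) (ha : ∀ i, b ≤ a i) (h1 : b < a 0)
    (J : Ideal (MvPolynomial (Fin (n + 1)) K))
    (hJ : J = Ideal.span
      ((Set.range fun l => (X l : MvPolynomial (Fin (n + 1)) K) ^ a l) ∪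
        {m | ∃ i j : Fin (n + 1), i < j ∧ m = X i ^ (a i - b) * X j ^ (a j - b)})) :
    Submodule.colon J (Ideal.span {(X 0 : MvPolynomial (Fin (n + 1)) K) ^ (a 0 - b)}) =
      Ideal.span ({(X 0 : MvPolynomial (Fin (n + 1)) K) ^ b} ∪
        {m | ∃ i : Fin (n + 1), i ≠ 0 ∧ m = X i ^ (a i - b)}) := by
  subst hJ
  -- rewrite generating sets as images of `monomial · 1`
  have hset1 : ((Set.range fun l => (X l : MvPolynomial (Fin (n + 1)) K) ^ a l) ∪
        {m | ∃ i j : Fin (n + 1), i < j ∧ m = X i ^ (a i - b) * X j ^ (a j - b)})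
      = (fun d => monomial d (1 : K)) '' ((Set.range fun l => Finsupp.single l (a l)) ∪
        {d | ∃ i j : Fin (n + 1), i < j ∧
          d = Finsupp.single i (a i - b) + Finsupp.single j (a j - b)}) := by
    rw [Set.image_union]
    congr 1
    · ext p
      simp only [Set.mem_range, Set.mem_image, X_pow_eq_monomial]
      constructor
      · rintro ⟨l, rfl⟩; exact ⟨Finsupp.single l (a l), ⟨l, rfl⟩, rfl⟩
      · rintro ⟨d, ⟨l, rfl⟩, rfl⟩; exact ⟨l, rfl⟩
    · ext p
      simp only [Set.mem_setOf_eq, Set.mem_image]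
      constructor
      · rintro ⟨i, j, hij, rfl⟩
        exact ⟨Finsupp.single i (a i - b) + Finsupp.single j (a j - b), ⟨i, j, hij, rfl⟩,
          by rw [X_pow_eq_monomial, X_pow_eq_monomial, monomial_mul, one_mul]⟩
      · rintro ⟨d, ⟨i, j, hij, rfl⟩, rfl⟩
        exact ⟨i, j, hij,
          by rw [X_pow_eq_monomial, X_pow_eq_monomial, monomial_mul, one_mul]⟩
  have hset2 : ({(X 0 : MvPolynomial (Fin (n + 1)) K) ^ b} ∪
        {m | ∃ i : Fin (n + 1), i ≠ 0 ∧ m = X i ^ (a i - b)})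
      = (fun d => monomial d (1 : K)) ''
        ({Finsupp.single (0 : Fin (n + 1)) b} ∪
          {d | ∃ i : Fin (n + 1), i ≠ 0 ∧ d = Finsupp.single i (a i - b)}) := by
    rw [Set.image_union, Set.image_singleton, X_pow_eq_monomial]
    congr 1
    ext p
    simp only [Set.mem_setOf_eq, Set.mem_image]
    constructor
    · rintro ⟨i, hi, rfl⟩
      exact ⟨Finsupp.single i (a i - b), ⟨i, hi, rfl⟩, X_pow_eq_monomial.symm⟩
    · rintro ⟨d, ⟨i, hi, rfl⟩, rfl⟩
      exact ⟨i, hi, X_pow_eq_monomial.symm⟩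
  rw [hset1, hset2]
  ext g
  rw [Ideal.mem_colon_span_singleton, mem_ideal_span_monomial_image,
    mem_ideal_span_monomial_image]
  have hf : (X 0 : MvPolynomial (Fin (n + 1)) K) ^ (a 0 - b)
      = monomial (Finsupp.single 0 (a 0 - b)) 1 := X_pow_eq_monomial
  constructor
  · intro H m hm
    have hmem : m + Finsupp.single 0 (a 0 - b) ∈
        (g * X 0 ^ (a 0 - b)).support := by
      rw [mem_support_iff, hf, coeff_mul_monomial, mul_one]
      exact mem_support_iff.mp hm
    obtain ⟨s, hs, hle⟩ := H _ hmem
    exact (stmt5_key n a b hb ha m).mp ⟨s, hs, hle⟩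
  · intro H m hm
    rw [mem_support_iff, hf, coeff_mul_monomial'] at hm
    split_ifs at hm with hle
    · rw [mul_one] at hm
      obtain ⟨t, ht, htle⟩ := H _ (mem_support_iff.mpr hm)
      obtain ⟨s, hs, hsle⟩ := (stmt5_key n a b hb ha (m - Finsupp.single 0 (a 0 - b))).mpr
        ⟨t, ht, htle⟩
      refine ⟨s, hs, ?_⟩
      rwa [tsub_add_cancel_of_le hle] at hsle
    · exact absurd rfl hm
end

section
/- Let $R$ be a polynomial ring over a field $K$, $J \subseteq R$ an ideal, and $f \in R$. If $R/J$, $R/(J:f)$ and $R/\langle J, f \rangle$ are finite-dimensional $K$-vector spaces, then $\dim_K(R/J) = \dim_K(R/(J:f)) + \dim_K(R/\langle J, f \rangle)$. -/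
set_option maxHeartbeats 1000000
set_option synthInstance.maxHeartbeats 400000

theorem stmt7 (K : Type*) [Field K] (n : ℕ)
    (J : Ideal (MvPolynomial (Fin n) K)) (f : MvPolynomial (Fin n) K)
    (h1 : FiniteDimensional K (MvPolynomial (Fin n) K ⧸ J))
    (h2 : FiniteDimensional K
      (MvPolynomial (Fin n) K ⧸ Submodule.colon J (Ideal.span {f})))
    (h3 : FiniteDimensional K
      (MvPolynomial (Fin n) K ⧸ (J ⊔ Ideal.span {f}))) :
    Module.finrank K (MvPolynomial (Fin n) K ⧸ J) =
      Module.finrank K (MvPolynomial (Fin n) K ⧸ Submodule.colon J (Ideal.span {f})) +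
        Module.finrank K (MvPolynomial (Fin n) K ⧸ (J ⊔ Ideal.span {f})) := by
  let ψ : MvPolynomial (Fin n) K →ₗ[K] MvPolynomial (Fin n) K ⧸ J :=
    (Ideal.Quotient.mkₐ K J).toLinearMap ∘ₗ LinearMap.mulLeft K f
  have hker : LinearMap.ker ψ = (Submodule.colon J (Ideal.span {f})).restrictScalars K := by
    ext g
    simp only [LinearMap.mem_ker, Submodule.restrictScalars_mem, ψ, LinearMap.comp_apply,
      LinearMap.mulLeft_apply, AlgHom.toLinearMap_apply, Ideal.Quotient.mkₐ_eq_mk,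
      Ideal.Quotient.eq_zero_iff_mem]
    constructor
    · intro h
      exact Submodule.mem_colon_span_singleton.2 (by rwa [smul_eq_mul, mul_comm])
    · intro h
      have := Submodule.mem_colon_span_singleton.1 h
      rwa [smul_eq_mul, mul_comm] at this
  have hrange : LinearMap.range ψ =
      ((Ideal.span {f}).map (Ideal.Quotient.mk J)).restrictScalars K := by
    ext y
    constructor
    · rintro ⟨g, rfl⟩
      simp only [Submodule.restrictScalars_mem]
      have : f * g ∈ Ideal.span {f} := Ideal.mul_mem_right _ _ (Ideal.subset_span rfl)
      exact Ideal.mem_map_of_mem _ this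
    · intro hy
      simp only [Submodule.restrictScalars_mem, Ideal.mem_map_iff_of_surjective _
        Ideal.Quotient.mk_surjective] at hy
      obtain ⟨x, hx, rfl⟩ := hy
      rw [Ideal.mem_span_singleton] at hx
      obtain ⟨g, rfl⟩ := hx
      exact ⟨g, rfl⟩
  have eqk : (MvPolynomial (Fin n) K ⧸
      (Submodule.colon J (Ideal.span {f})).restrictScalars K) ≃ₗ[K]
      (MvPolynomial (Fin n) K ⧸ LinearMap.ker ψ) :=
    Submodule.Quotient.equiv _ _ (LinearEquiv.refl K _)
      (by rw [hker]; exact Submodule.map_id _)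
  have e1 : (MvPolynomial (Fin n) K ⧸ Submodule.colon J (Ideal.span {f})) ≃ₗ[K]
      LinearMap.range ψ :=
    ((Submodule.Quotient.restrictScalarsEquiv K
      (Submodule.colon J (Ideal.span {f}))).symm.trans eqk).trans ψ.quotKerEquivRange
  have e2 : ((MvPolynomial (Fin n) K ⧸ J) ⧸ LinearMap.range ψ) ≃ₗ[K]
      (MvPolynomial (Fin n) K ⧸ (J ⊔ Ideal.span {f})) := by
    refine (Submodule.Quotient.equiv _ (((Ideal.span {f}).map
        (Ideal.Quotient.mk J)).restrictScalars K) (LinearEquiv.refl K _) ?_).trans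
      ((Submodule.Quotient.restrictScalarsEquiv K _).trans
        ((DoubleQuot.quotQuotEquivQuotSup J (Ideal.span {f})).toEquiv.toLinearEquiv ?_))
    · rw [hrange]; exact Submodule.map_id _
    · refine ⟨fun a b => map_add (DoubleQuot.quotQuotEquivQuotSup J (Ideal.span {f})) a b, fun c x => ?_⟩
      induction x using Quotient.inductionOn with
      | h x =>
        induction x using Quotient.inductionOn with
        | h x => rfl
  rw [← Submodule.finrank_quotient_add_finrank (LinearMap.range ψ),
    e1.finrank_eq, e2.finrank_eq]
  exact add_comm _ _
end

section
/- Let $M$ be an $n \times n$ real symmetric positive semidefinite matrix and let $N$ be obtained from $M$ by replacing one diagonal entry $M_{ii}$ with a real number $b \le M_{ii}$ (keeping all other entries). If $\det N > 0$, then $N$ is positive definite. -/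
open scoped Matrix

theorem stmt8 (n : ℕ) (M N : Matrix (Fin n) (Fin n) ℝ) (i : Fin n) (b : ℝ)
    (hM : M.PosSemidef) (hb : b ≤ M i i)
    (hN : ∀ k l, N k l = if k = i ∧ l = i then b else M k l)
    (hdet : 0 < N.det) : N.PosDef := by
  classical
  -- N is symmetric (Hermitian)
  have hMH : M.IsHermitian := hM.1
  have hH : N.IsHermitian := by
    ext k l
    simp only [Matrix.conjTranspose_apply, star_trivial]
    rw [hN, hN]
    have hMs : ∀ k l : Fin n, M k l = M l k := by
      intro k l
      conv_lhs => rw [← hMH]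
      simp [Matrix.conjTranspose_apply]
    by_cases hk : k = i <;> by_cases hl : l = i <;> simp [hk, hl, hMs l k, hMs i k, hMs l i]
  -- quadratic form of N is nonneg on vectors vanishing at i
  have key : ∀ x : Fin n → ℝ, x i = 0 → 0 ≤ x ⬝ᵥ N *ᵥ x := by
    intro x hx
    have heq : x ⬝ᵥ N *ᵥ x = x ⬝ᵥ M *ᵥ x := by
      unfold dotProduct Matrix.mulVec dotProduct
      apply Finset.sum_congr rfl
      intro k _
      congr 1
      apply Finset.sum_congr rfl
      intro l _
      by_cases hl : l = i
      · subst hl; rw [hx]; ring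
      · simp [hN, hl]
    rw [heq]
    simpa using hM.dotProduct_mulVec_nonneg x
  -- at most one negative eigenvalue
  have atmost : ∀ j k : Fin n, j ≠ k → hH.eigenvalues j < 0 → hH.eigenvalues k < 0 → False := by
    intro j k hjk hj hk
    set v : Fin n → ℝ := ⇑(hH.eigenvectorBasis j) with hv
    set w : Fin n → ℝ := ⇑(hH.eigenvectorBasis k) with hw
    have hon := hH.eigenvectorBasis.orthonormal
    rw [orthonormal_iff_ite] at hon
    have hvv : v ⬝ᵥ v = 1 := by
      have := hon j j
      simp only [PiLp.inner_apply] at this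
      simpa [PiLp.inner_apply, dotProduct, mul_comm, sq, hv, hw] using this
    have hww : w ⬝ᵥ w = 1 := by
      have := hon k k
      simp only [PiLp.inner_apply] at this
      simpa [PiLp.inner_apply, dotProduct, mul_comm, sq, hv, hw] using this
    have hvw : v ⬝ᵥ w = 0 := by
      have := hon j k
      simp only [PiLp.inner_apply] at this
      simpa [PiLp.inner_apply, dotProduct, hjk, mul_comm] using this
    have hwv : w ⬝ᵥ v = 0 := by
      have := hon k j
      simp only [PiLp.inner_apply] at this
      simpa [PiLp.inner_apply, dotProduct, hjk.symm, mul_comm] using this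
    have hNv : N *ᵥ v = hH.eigenvalues j • v := hH.mulVec_eigenvectorBasis j
    have hNw : N *ᵥ w = hH.eigenvalues k • w := hH.mulVec_eigenvectorBasis k
    -- the combination u vanishes at i
    set u : Fin n → ℝ := w i • v - v i • w with hu
    have hui : u i = 0 := by simp [hu]; ring
    have hNu : N *ᵥ u = (w i * hH.eigenvalues j) • v - (v i * hH.eigenvalues k) • w := by
      rw [hu, Matrix.mulVec_sub, Matrix.mulVec_smul, Matrix.mulVec_smul, hNv, hNw,
        smul_smul, smul_smul]
    have hq : u ⬝ᵥ N *ᵥ u = hH.eigenvalues j * (w i) ^ 2 + hH.eigenvalues k * (v i) ^ 2 := by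
      rw [hNu, hu]
      simp only [sub_dotProduct, dotProduct_sub, smul_dotProduct,
        dotProduct_smul, hvv, hww, hvw, hwv, smul_eq_mul]
      ring
    have h0 : 0 ≤ u ⬝ᵥ N *ᵥ u := key u hui
    rw [hq] at h0
    have h2 : hH.eigenvalues k * v i ^ 2 ≤ 0 :=
      mul_nonpos_of_nonpos_of_nonneg hk.le (sq_nonneg _)
    have h1 : hH.eigenvalues j * w i ^ 2 ≤ 0 :=
      mul_nonpos_of_nonpos_of_nonneg hj.le (sq_nonneg _)
    have hwi : w i = 0 := by
      by_contra hne
      have hs : 0 < w i ^ 2 := by positivity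
      linarith [mul_neg_of_neg_of_pos hj hs]
    have hvi : v i = 0 := by
      by_contra hne
      have hs : 0 < v i ^ 2 := by positivity
      linarith [mul_neg_of_neg_of_pos hk hs]
    have h0' : 0 ≤ v ⬝ᵥ N *ᵥ v := key v hvi
    rw [hNv, dotProduct_smul, hvv, smul_eq_mul, mul_one] at h0'
    exact absurd h0' (not_le.mpr hj)
  -- determinant is the product of eigenvalues
  have hdet' : N.det = ∏ j, hH.eigenvalues j := by
    rw [hH.det_eq_prod_eigenvalues]
    norm_num
  -- no eigenvalue is zero
  have hne : ∀ j, hH.eigenvalues j ≠ 0 := by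
    intro j hj
    rw [hdet'] at hdet
    exact absurd (Finset.prod_eq_zero (Finset.mem_univ j) hj) (by positivity)
  -- all eigenvalues positive
  have hpos : ∀ j, 0 < hH.eigenvalues j := by
    by_contra hcon
    push_neg at hcon
    obtain ⟨j, hj⟩ := hcon
    have hjneg : hH.eigenvalues j < 0 := lt_of_le_of_ne hj (hne j)
    have hrest : ∀ k, k ≠ j → 0 < hH.eigenvalues k := by
      intro k hk
      rcases lt_trichotomy (hH.eigenvalues k) 0 with h | h | h
      · exact absurd (atmost j k (Ne.symm hk) hjneg h) (fun f => f)
      · exact absurd h (hne k)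
      · exact h
    have : N.det < 0 := by
      rw [hdet', ← Finset.prod_erase_mul _ _ (Finset.mem_univ j)]
      apply mul_neg_of_pos_of_neg _ hjneg
      apply Finset.prod_pos
      intro k hk
      exact hrest k (Finset.ne_of_mem_erase hk)
    linarith
  -- conclude: N is PSD with nonzero determinant, hence PosDef
  have hpsd : N.PosSemidef := hH.posSemidef_iff_eigenvalues_nonneg.mpr (fun j => (hpos j).le)
  refine Matrix.posDef_iff_dotProduct_mulVec.mpr ⟨hH, fun x hx => ?_⟩
  rcases lt_or_eq_of_le (hpsd.dotProduct_mulVec_nonneg x) with h | h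
  · exact h
  · exfalso
    have hz : N *ᵥ x = 0 := (hpsd.dotProduct_mulVec_zero_iff x).mp h.symm
    have hinj : Function.Injective N.mulVec :=
      Matrix.mulVec_injective_iff_isUnit.mpr ((Matrix.isUnit_iff_isUnit_det N).mpr hdet.ne'.isUnit)
    exact hx (hinj (by simpa using hz))
end

section
/- Let $M$ be an $n \times n$ Hermitian positive definite matrix with block decomposition $M = \begin{pmatrix} A & B \\ B^* & C \end{pmatrix}$ where $A$ and $C$ are square. Then $\det M = \det A \cdot \det C$ if and only if $B = 0$. -/
open scoped ComplexOrder
open Matrix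

/-- If `Q` is PSD and `det (1 + Q) = 1`, then `Q = 0`. -/
lemma aux_psd_det_one_add {n : ℕ} {Q : Matrix (Fin n) (Fin n) ℂ}
    (hQ : Q.PosSemidef) (h : (1 + Q).det = 1) : Q = 0 := by
  have hH := hQ.1
  set μ := hH.eigenvalues with hμdef
  have hμ : ∀ i, 0 ≤ μ i := hQ.eigenvalues_nonneg
  set U : Matrix (Fin n) (Fin n) ℂ := (hH.eigenvectorUnitary : Matrix (Fin n) (Fin n) ℂ) with hUdef
  have hspec : Q = U * Matrix.diagonal ((↑) ∘ μ) * star U := hH.spectral_theorem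
  have hU1 : U * star U = 1 := (Matrix.mem_unitaryGroup_iff).mp hH.eigenvectorUnitary.2
  have h1 : (1 + Q) = U * Matrix.diagonal (fun i => (1 : ℂ) + μ i) * star U := by
    have : Matrix.diagonal (fun i => (1 : ℂ) + μ i)
        = 1 + Matrix.diagonal ((↑) ∘ μ) := by
      rw [← Matrix.diagonal_one, Matrix.diagonal_add]
      rfl
    rw [this, Matrix.mul_add, Matrix.add_mul, Matrix.mul_one, hU1, ← hspec]
  have hdet : (1 + Q).det = ∏ i, ((1 : ℂ) + μ i) := by
    rw [h1, Matrix.det_mul, Matrix.det_mul, mul_comm, ← mul_assoc, ← Matrix.det_mul]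
    have : star U * U = 1 := (Matrix.mem_unitaryGroup_iff').mp hH.eigenvectorUnitary.2
    rw [this, Matrix.det_one, one_mul, Matrix.det_diagonal]
  rw [h] at hdet
  have hreal : ∏ i, (1 + μ i) = (1 : ℝ) := by
    have hc : ((∏ i, (1 + μ i) : ℝ) : ℂ) = ∏ i, ((1 : ℂ) + μ i) := by push_cast; rfl
    exact_mod_cast hc.trans hdet.symm
  have hμ0 : ∀ j, μ j = 0 := by
    intro j
    have h1 : (1 : ℝ) ≤ ∏ i ∈ Finset.univ.erase j, (1 + μ i) := by
      calc (1 : ℝ) = ∏ _i ∈ Finset.univ.erase j, (1 : ℝ) := Finset.prod_const_one.symm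
        _ ≤ _ := Finset.prod_le_prod (fun i _ => zero_le_one) (fun i _ => by linarith [hμ i])
    have h2 : (1 + μ j) * ∏ i ∈ Finset.univ.erase j, (1 + μ i) = 1 := by
      rw [Finset.mul_prod_erase Finset.univ (fun i => 1 + μ i) (Finset.mem_univ j)]
      exact hreal
    have h3 : (1 + μ j) * 1 ≤ (1 + μ j) * ∏ i ∈ Finset.univ.erase j, (1 + μ i) :=
      mul_le_mul_of_nonneg_left h1 (by linarith [hμ j])
    exact le_antisymm (by nlinarith [hμ j]) (hμ j)
  have hdiag : Matrix.diagonal ((↑) ∘ μ : Fin n → ℂ) = 0 := by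
    rw [show ((↑) ∘ μ : Fin n → ℂ) = 0 from funext fun i => by simp [hμ0 i]]
    exact Matrix.diagonal_zero
  rw [hspec, hdiag, Matrix.mul_zero, Matrix.zero_mul]

open scoped MatrixOrder in
/-- If `P` is PD, `Q` is PSD and `det (P + Q) = det P`, then `Q = 0`. -/
lemma aux_pd_det_add {n : ℕ} {P Q : Matrix (Fin n) (Fin n) ℂ}
    (hP : P.PosDef) (hQ : Q.PosSemidef) (h : (P + Q).det = P.det) : Q = 0 := by
  set T := CFC.sqrt P with hTdef
  have hT : T.PosSemidef := (CFC.sqrt_nonneg P).posSemidef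
  have hTT : T * T = P := CFC.sqrt_mul_sqrt_self P hP.posSemidef.nonneg
  have hPdet : P.det ≠ 0 := ne_of_gt hP.det_pos
  have hdetT : T.det ≠ 0 := by
    intro h0
    apply hPdet
    rw [← hTT, Matrix.det_mul, h0, mul_zero]
  have hTunit : IsUnit T.det := isUnit_iff_ne_zero.mpr hdetT
  have hTinv : T * T⁻¹ = 1 := Matrix.mul_nonsing_inv T hTunit
  have hTinv' : T⁻¹ * T = 1 := Matrix.nonsing_inv_mul T hTunit
  set Q' := T⁻¹ * Q * T⁻¹ with hQ'def
  have hQ'psd : Q'.PosSemidef := by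
    have := hQ.conjTranspose_mul_mul_same (B := T⁻¹)
    rwa [hT.1.inv.eq] at this
  have hkey : P + Q = T * (1 + Q') * T := by
    rw [Matrix.mul_add, Matrix.add_mul, Matrix.mul_one, hTT, hQ'def]
    congr 1
    rw [show T * (T⁻¹ * Q * T⁻¹) * T = (T * T⁻¹) * Q * (T⁻¹ * T) by
      simp only [Matrix.mul_assoc], hTinv, hTinv', Matrix.one_mul, Matrix.mul_one]
  have hdet1 : (1 + Q').det = 1 := by
    have h2 : (P + Q).det = P.det * (1 + Q').det := by
      rw [hkey, Matrix.det_mul, Matrix.det_mul, ← hTT, Matrix.det_mul]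
      ring
    have h3 : P.det * (1 + Q').det = P.det * 1 := by rw [mul_one, ← h2, h]
    exact mul_left_cancel₀ hPdet h3
  have hQ'0 : Q' = 0 := aux_psd_det_one_add hQ'psd hdet1
  have : P + Q = P := by rw [hkey, hQ'0, add_zero, Matrix.mul_one, hTT]
  have := congrArg (· - P) this
  simpa using this

theorem stmt11 (k l : ℕ) (A : Matrix (Fin k) (Fin k) ℂ)
    (B : Matrix (Fin k) (Fin l) ℂ) (C : Matrix (Fin l) (Fin l) ℂ)
    (hM : (Matrix.fromBlocks A B B.conjTranspose C).PosDef) :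
    (Matrix.fromBlocks A B B.conjTranspose C).det = A.det * C.det ↔ B = 0 := by
  obtain ⟨hAH, -, -, hCH⟩ := isHermitian_fromBlocks_iff.mp hM.1
  -- A is positive definite
  have hA : A.PosDef := by
    refine PosDef.of_dotProduct_mulVec_pos hAH fun x hx => ?_
    have hy : (Sum.elim x (0 : Fin l → ℂ)) ≠ 0 := by
      intro h0
      exact hx (funext fun i => congrFun h0 (Sum.inl i))
    have := hM.dotProduct_mulVec_pos hy
    simpa [Matrix.fromBlocks_mulVec, Function.star_sumElim,
      sumElim_dotProduct_sumElim, Sum.elim_comp_inl, Sum.elim_comp_inr] using this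
  have hAdet : A.det ≠ 0 := ne_of_gt hA.det_pos
  haveI : Invertible A := A.invertibleOfIsUnitDet (isUnit_iff_ne_zero.mpr hAdet)
  -- Schur complement
  set S := Bᴴ * A⁻¹ * B with hSdef
  have hSpsd : S.PosSemidef := hA.inv.posSemidef.conjTranspose_mul_mul_same B
  have hCS : (C - S).PosDef := by
    refine PosDef.of_dotProduct_mulVec_pos (hCH.sub hSpsd.1) fun x hx => ?_
    have hy : (Sum.elim (-((A⁻¹ * B) *ᵥ x)) x) ≠ 0 := by
      intro h0
      exact hx (funext fun i => congrFun h0 (Sum.inr i))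
    have := hM.dotProduct_mulVec_pos hy
    rw [Matrix.dotProduct_mulVec,
      Matrix.schur_complement_eq₁₁ B C _ _ hAH, neg_add_cancel] at this
    simp only [star_zero, Matrix.zero_vecMul, zero_dotProduct, zero_add] at this
    rwa [Matrix.dotProduct_mulVec]
  have hdetM : (Matrix.fromBlocks A B Bᴴ C).det = A.det * (C - S).det := by
    rw [Matrix.det_fromBlocks₁₁, Matrix.invOf_eq_nonsing_inv]
  constructor
  · intro h
    rw [hdetM] at h
    have hdet : (C - S).det = C.det := mul_left_cancel₀ hAdet h
    have hS0 : S = 0 := by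
      refine aux_pd_det_add hCS hSpsd ?_
      rw [sub_add_cancel, hdet]
    -- S = 0 implies B = 0
    by_contra hB
    obtain ⟨i, j, hij⟩ : ∃ i j, B i j ≠ 0 := by
      by_contra hall
      push_neg at hall
      exact hB (Matrix.ext fun i j => hall i j)
    have hBx : B *ᵥ Pi.single j 1 ≠ 0 := by
      intro h0
      apply hij
      simpa [Matrix.mulVec_single] using congrFun h0 i
    have hpos := hA.inv.dotProduct_mulVec_pos hBx
    have hS0' : Bᴴ * A⁻¹ * B = 0 := hSdef ▸ hS0
    have heq : star (Pi.single j 1 : Fin l → ℂ) ⬝ᵥ (Bᴴ * A⁻¹ * B) *ᵥ Pi.single j 1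
        = star (B *ᵥ Pi.single j 1) ⬝ᵥ A⁻¹ *ᵥ (B *ᵥ Pi.single j 1) := by
      rw [show Bᴴ * A⁻¹ * B = Bᴴ * (A⁻¹ * B) from Matrix.mul_assoc _ _ _,
        ← Matrix.mulVec_mulVec, ← Matrix.mulVec_mulVec,
        Matrix.dotProduct_mulVec _ Bᴴ, ← Matrix.star_mulVec]
    rw [hS0'] at heq
    simp only [Matrix.zero_mulVec, dotProduct_zero] at heq
    rw [← heq] at hpos
    exact lt_irrefl _ hpos
  · intro h
    subst h
    simp [Matrix.det_fromBlocks_zero₁₂]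
end

section
/- Let $G$ be a multigraph on vertices $\{0,1,\ldots,n\}$ obtained from the complete multigraph $K_{n+1}^{a,b}$ (with $a,b \ge 1$) by deleting some edges incident to the root $0$, so that vertex $i$ retains $a_i$ edges to the root with $0 \le a_i \le a$. Then $\dim_K(R/\mathcal{M}_G^{(1)}) = \det \widetilde{Q}_G$, where $\widetilde{Q}_G$ is the matrix with diagonal entries $a_i + (n-1)b$ and off-diagonal entries $b$, and $\mathcal{M}_G^{(1)} \subseteq R = K[x_1,\ldots,x_n]$ is generated by $x_t^{a_t + (n-1)b}$ for all $t$ and $x_i^{a_i + (n-2)b} x_j^{a_j + (n-2)b}$ for all $i < j$. -/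
open MvPolynomial Finset

lemma det_diag_add_const (n : ℕ) (d : Fin n → ℤ) (β : ℤ) :
    (Matrix.of fun i j => if i = j then d i + β else β).det
      = ∏ i, d i + ∑ i, β * ∏ j ∈ univ.erase i, d j := by
  classical
  set f := (Matrix.detRowAlternating : (Fin n → ℤ) [⋀^Fin n]→ₗ[ℤ] ℤ) with hf
  set m : Fin n → Fin n → ℤ := fun i => d i • Pi.single i (1:ℤ) with hm
  set m' : Fin n → Fin n → ℤ := fun _ _ => β with hm'
  have hM : (Matrix.of fun i j => if i = j then d i + β else β) = (m + m' : Fin n → Fin n → ℤ) := by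
    ext i j
    by_cases h : i = j <;> simp [hm, hm', Pi.single_apply, h, eq_comm]
  have hdet : (Matrix.of fun i j => if i = j then d i + β else β).det
      = f.toMultilinearMap (m + m') := by rw [← hM]; rfl
  rw [hdet, f.toMultilinearMap.map_add_univ]
  -- classify the subsets
  have hzero : ∀ s : Finset (Fin n), 2 ≤ (univ \ s).card →
      f.toMultilinearMap (s.piecewise m m') = 0 := by
    intro s hs
    obtain ⟨i, hi, j, hj, hij⟩ := Finset.one_lt_card.mp hs
    simp only [mem_sdiff, mem_univ, true_and] at hi hj
    exact f.map_eq_zero_of_eq _ (by simp [Finset.piecewise_eq_of_notMem _ _ _ hi,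
      Finset.piecewise_eq_of_notMem _ _ _ hj, hm']) hij
  have huniv : f.toMultilinearMap (Finset.univ.piecewise m m') = ∏ i, d i := by
    rw [Finset.piecewise_univ]
    have : m = fun i => d i • Pi.single i (1:ℤ) := hm
    rw [this, MultilinearMap.map_smul_univ (f := f.toMultilinearMap) d (fun i => Pi.single i (1:ℤ))]
    have h1 : (fun i => Pi.single i (1:ℤ)) = (1 : Matrix (Fin n) (Fin n) ℤ) := by
      funext i j
      by_cases h : i = j
      · subst h; simp [Matrix.one_apply, Pi.single_apply]
      · simp [Matrix.one_apply, Pi.single_apply, h, fun hji : j = i => h hji.symm]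
    have : f.toMultilinearMap (fun i => Pi.single i (1:ℤ)) = Matrix.det (1 : Matrix (Fin n) (Fin n) ℤ) := by
      rw [← h1]; rfl
    rw [this, Matrix.det_one, smul_eq_mul, mul_one]
  have herase : ∀ i : Fin n, f.toMultilinearMap ((univ.erase i).piecewise m m')
      = β * ∏ j ∈ univ.erase i, d j := by
    intro i
    have hv : (univ.erase i).piecewise m m'
        = fun j => (if j = i then β else d j) • (Matrix.updateRow (1 : Matrix (Fin n) (Fin n) ℤ) i (fun _ => 1) j) := by
      funext j
      by_cases h : j = i
      · subst h
        rw [Finset.piecewise_eq_of_notMem _ _ _ (Finset.notMem_erase j univ)]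
        funext k
        simp [hm', Matrix.updateRow_self]
      · rw [Finset.piecewise_eq_of_mem _ _ _ (Finset.mem_erase.mpr ⟨h, Finset.mem_univ j⟩),
          Matrix.updateRow_ne h, if_neg h]
        funext k
        by_cases hk : j = k
        · subst hk; simp [hm, Matrix.one_apply, Pi.single_apply]
        · simp [hm, Matrix.one_apply, Pi.single_apply, hk, fun h' : k = j => hk h'.symm]
    rw [hv, MultilinearMap.map_smul_univ (f := f.toMultilinearMap) (fun j => if j = i then β else d j) (Matrix.updateRow (1 : Matrix (Fin n) (Fin n) ℤ) i (fun _ => 1))]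
    have hdet1 : f.toMultilinearMap (Matrix.updateRow (1 : Matrix (Fin n) (Fin n) ℤ) i (fun _ => 1))
        = Matrix.det (Matrix.updateRow (1 : Matrix (Fin n) (Fin n) ℤ) i (fun _ => 1)) := rfl
    have hc1 : Matrix.det (Matrix.updateRow (1 : Matrix (Fin n) (Fin n) ℤ) i (fun _ => 1)) = 1 := by
      rw [← Matrix.cramer_transpose_apply, Matrix.transpose_one, Matrix.cramer_one]
      simp
    rw [hdet1, hc1, smul_eq_mul, mul_one]
    rw [← Finset.mul_prod_erase univ _ (Finset.mem_univ i)]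
    simp only [if_pos rfl]
    congr 1
    exact Finset.prod_congr rfl fun j hj => by rw [if_neg (Finset.mem_erase.mp hj).1]
  -- now the sum
  let T : Finset (Finset (Fin n)) := insert univ (univ.image fun i => univ.erase i)
  rw [show ∑ s : Finset (Fin n), f.toMultilinearMap (s.piecewise m m')
      = ∑ s ∈ T, f.toMultilinearMap (s.piecewise m m') from
    (Finset.sum_subset (Finset.subset_univ T) ?_).symm]
  · rw [Finset.sum_insert, Finset.sum_image]
    · rw [huniv]
      congr 1
      exact Finset.sum_congr rfl fun i _ => herase i
    · intro i _ j _ h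
      by_contra hij
      have : i ∈ univ.erase j := Finset.mem_erase.mpr ⟨hij, Finset.mem_univ i⟩
      rw [← (by exact h : univ.erase i = univ.erase j)] at this
      exact (Finset.notMem_erase i univ) this
    · intro hu
      obtain ⟨i, -, hi⟩ := Finset.mem_image.mp hu
      have : i ∈ (univ : Finset (Fin n)) := Finset.mem_univ i
      rw [← hi] at this
      exact (Finset.notMem_erase i univ) this
  · intro s _ hsT
    apply hzero
    by_contra hcard
    push_neg at hcard
    interval_cases h : (univ \ s).card
    · have : s = univ := by
        have := Finset.sdiff_eq_empty_iff_subset.mp (Finset.card_eq_zero.mp h)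
        exact Finset.univ_subset_iff.mp this
      exact hsT (by simp [T, this])
    · obtain ⟨i, hi⟩ := Finset.card_eq_one.mp h
      have : s = univ.erase i := by
        have hsub : s ⊆ univ := Finset.subset_univ s
        ext x
        constructor
        · intro hx
          refine Finset.mem_erase.mpr ⟨?_, Finset.mem_univ x⟩
          rintro rfl
          have : x ∉ univ \ s := by simp [hx]
          rw [hi] at this; simp at this
        · intro hx
          obtain ⟨hxi, -⟩ := Finset.mem_erase.mp hx
          by_contra hxs
          have : x ∈ univ \ s := by simp [hxs]
          rw [hi] at this
          exact hxi (Finset.mem_singleton.mp this)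
      exact hsT (by
        simp only [T, Finset.mem_insert, Finset.mem_image]
        exact Or.inr ⟨i, Finset.mem_univ i, this.symm⟩)

lemma count_standard (n : ℕ) (D d : Fin n → ℕ) (hdD : ∀ t, d t ≤ D t) :
    ((Fintype.piFinset fun t => Finset.range (D t)).filter fun f =>
        ∀ i j : Fin n, i < j → f i < d i ∨ f j < d j).card
      = ∏ t, d t + ∑ i, (D i - d i) * ∏ j ∈ univ.erase i, d j := by
  classical
  set F0 : Finset (Fin n → ℕ) := Fintype.piFinset fun t => Finset.range (d t) with hF0
  set FF : Fin n → Finset (Fin n → ℕ) :=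
    fun i => Fintype.piFinset fun t => if t = i then Finset.Ico (d i) (D i) else Finset.range (d t)
    with hFF
  have hpair : ∀ f : Fin n → ℕ, (∀ i j : Fin n, i < j → f i < d i ∨ f j < d j) →
      ∀ i j : Fin n, i ≠ j → d i ≤ f i → f j < d j := by
    intro f hf i j hij hdi
    rcases lt_or_gt_of_ne hij with h | h
    · rcases hf i j h with h' | h'
      · omega
      · exact h'
    · rcases hf j i h with h' | h'
      · exact h'
      · omega
  have hunion : ((Fintype.piFinset fun t => Finset.range (D t)).filter fun f =>
      ∀ i j : Fin n, i < j → f i < d i ∨ f j < d j) = F0 ∪ univ.biUnion FF := by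
    ext f
    simp only [mem_filter, Fintype.mem_piFinset, Finset.mem_range, Finset.mem_union,
      Finset.mem_biUnion, mem_univ, true_and, hF0, hFF]
    constructor
    · rintro ⟨hD, hp⟩
      by_cases hall : ∀ t, f t < d t
      · exact Or.inl hall
      · push_neg at hall
        obtain ⟨i, hi⟩ := hall
        refine Or.inr ⟨i, fun t => ?_⟩
        by_cases ht : t = i
        · subst ht
          rw [if_pos rfl, Finset.mem_Ico]
          exact ⟨hi, hD t⟩
        · rw [if_neg ht, Finset.mem_range]
          exact hpair f hp i t (fun h => ht h.symm) hi
    · rintro (hall | ⟨i, hi⟩)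
      · exact ⟨fun t => lt_of_lt_of_le (hall t) (hdD t), fun i j _ => Or.inl (hall i)⟩
      · have hfi : d i ≤ f i ∧ f i < D i := by
          have := hi i; rw [if_pos rfl, Finset.mem_Ico] at this; exact this
        have hother : ∀ t, t ≠ i → f t < d t := by
          intro t ht
          have := hi t; rw [if_neg ht, Finset.mem_range] at this; exact this
        constructor
        · intro t
          by_cases ht : t = i
          · subst ht; exact hfi.2
          · exact lt_of_lt_of_le (hother t ht) (hdD t)
        · intro i' j' hij'
          by_cases h1 : i' = i
          · subst h1
            exact Or.inr (hother j' (by rintro rfl; exact absurd hij' (lt_irrefl _)))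
          · exact Or.inl (hother i' h1)
  rw [hunion]
  have hdisj : Disjoint F0 (univ.biUnion FF) := by
    rw [Finset.disjoint_left]
    intro f hf0 hfb
    simp only [hF0, Fintype.mem_piFinset, Finset.mem_range] at hf0
    simp only [Finset.mem_biUnion, mem_univ, true_and, hFF] at hfb
    obtain ⟨i, hi⟩ := hfb
    rw [Fintype.mem_piFinset] at hi
    have := hi i
    rw [if_pos rfl, Finset.mem_Ico] at this
    exact absurd (hf0 i) (not_lt.mpr this.1)
  rw [Finset.card_union_of_disjoint hdisj]
  have hpd : ((univ : Finset (Fin n)) : Set (Fin n)).PairwiseDisjoint FF := by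
    intro i _ j _ hij
    rw [Function.onFun, Finset.disjoint_left]
    intro f hfi hfj
    rw [Fintype.mem_piFinset] at hfi hfj
    have h1 := hfi i; rw [if_pos rfl, Finset.mem_Ico] at h1
    have h2 := hfj i; rw [if_neg hij, Finset.mem_range] at h2
    omega
  rw [Finset.card_biUnion hpd]
  congr 1
  · rw [hF0, Fintype.card_piFinset]
    exact Finset.prod_congr rfl fun t _ => Finset.card_range (d t)
  · refine Finset.sum_congr rfl fun i _ => ?_
    rw [hFF, Fintype.card_piFinset]
    rw [← Finset.mul_prod_erase univ _ (Finset.mem_univ i), if_pos rfl, Nat.card_Ico]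
    congr 1
    refine Finset.prod_congr rfl fun j hj => ?_
    rw [if_neg (Finset.mem_erase.mp hj).1, Finset.card_range]

lemma finrank_quotient_monomial (K : Type*) [Field K] (n : ℕ) (D d : Fin n → ℕ)
    (J : Ideal (MvPolynomial (Fin n) K))
    (hJ : J = Ideal.span
      ((Set.range fun t => (X t : MvPolynomial (Fin n) K) ^ D t) ∪
        {m | ∃ i j : Fin n, i < j ∧ m = X i ^ d i * X j ^ d j})) :
    Module.finrank K (MvPolynomial (Fin n) K ⧸ J)
      = ((Fintype.piFinset fun t => Finset.range (D t)).filter fun f =>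
          ∀ i j : Fin n, i < j → f i < d i ∨ f j < d j).card := by
  classical
  set Std : (Fin n →₀ ℕ) → Prop :=
    fun s => (∀ t, s t < D t) ∧ ∀ i j : Fin n, i < j → s i < d i ∨ s j < d j with hStdDef
  -- coefficients of elements of J vanish on standard monomials
  have h_coeff : ∀ p ∈ J, ∀ s : Fin n →₀ ℕ, Std s → coeff s p = 0 := by
    rw [hJ]
    intro p hp
    refine Submodule.span_induction (p := fun x _ => ∀ s : Fin n →₀ ℕ, Std s → coeff s x = 0)
      ?_ ?_ ?_ ?_ hp
    · rintro x (⟨t, rfl⟩ | ⟨i, j, hij, rfl⟩) s hs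
      · show coeff s ((X t : MvPolynomial (Fin n) K) ^ D t) = 0
        rw [X_pow_eq_monomial, coeff_monomial, if_neg]
        intro h
        have h1 := hs.1 t
        rw [← h, Finsupp.single_eq_same] at h1
        exact absurd h1 (lt_irrefl _)
      · rw [X_pow_eq_monomial, X_pow_eq_monomial, monomial_mul, one_mul, coeff_monomial, if_neg]
        intro h
        have hne : i ≠ j := hij.ne
        have h1 : s i = d i := by
          rw [← h, Finsupp.add_apply, Finsupp.single_eq_same,
            Finsupp.single_eq_of_ne' (Ne.symm hne), add_zero]
        have h2 : s j = d j := by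
          rw [← h, Finsupp.add_apply, Finsupp.single_eq_same,
            Finsupp.single_eq_of_ne' hne, zero_add]
        rcases hs.2 i j hij with h' | h' <;> omega
    · intro s _; simp
    · intro x y _ _ hx hy s hs
      rw [coeff_add, hx s hs, hy s hs, add_zero]
    · intro a x _ hx s hs
      rw [smul_eq_mul]
      by_contra hne
      have hmem : s ∈ (a * x).support := mem_support_iff.mpr hne
      have hsub := support_mul a x hmem
      rw [Finset.mem_add] at hsub
      obtain ⟨u, hu, v, hv, huv⟩ := hsub
      have hvle : ∀ t, v t ≤ s t := by
        intro t
        rw [← huv, Finsupp.add_apply]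
        exact Nat.le_add_left _ _
      have hvStd : Std v := by
        refine ⟨fun t => lt_of_le_of_lt (hvle t) (hs.1 t), fun i j hij => ?_⟩
        rcases hs.2 i j hij with h' | h'
        · exact Or.inl (lt_of_le_of_lt (hvle i) h')
        · exact Or.inr (lt_of_le_of_lt (hvle j) h')
      exact absurd (hx v hvStd) (mem_support_iff.mp hv)
  -- non-standard monomials belong to J
  have h_not_std : ∀ u : Fin n →₀ ℕ, ¬ Std u → monomial u (1 : K) ∈ J := by
    intro u hu
    rw [hStdDef, not_and_or] at hu
    push_neg at hu
    rw [hJ]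
    rcases hu with ⟨t, ht⟩ | ⟨i, j, hij, h1, h2⟩
    · have hle : Finsupp.single t (D t) ≤ u := Finsupp.single_le_iff.mpr ht
      have heq : monomial u (1 : K)
          = (X t ^ D t) * monomial (u - Finsupp.single t (D t)) 1 := by
        rw [X_pow_eq_monomial, monomial_mul, one_mul, add_tsub_cancel_of_le hle]
      rw [heq]
      exact Ideal.mul_mem_right _ _ (Ideal.subset_span (Or.inl ⟨t, rfl⟩))
    · have hne : i ≠ j := hij.ne
      have hle : Finsupp.single i (d i) + Finsupp.single j (d j) ≤ u := by
        rw [Finsupp.le_def]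
        intro t
        rw [Finsupp.add_apply, Finsupp.single_apply, Finsupp.single_apply]
        by_cases hti : i = t
        · subst hti
          rw [if_pos rfl, if_neg (Ne.symm hne)]
          omega
        · rw [if_neg hti]
          by_cases htj : j = t
          · subst htj; rw [if_pos rfl]; omega
          · rw [if_neg htj]; omega
      have heq : monomial u (1 : K)
          = (X i ^ d i * X j ^ d j)
            * monomial (u - (Finsupp.single i (d i) + Finsupp.single j (d j))) 1 := by
        rw [X_pow_eq_monomial, X_pow_eq_monomial, monomial_mul, one_mul, monomial_mul, one_mul,
          add_tsub_cancel_of_le hle]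
      rw [heq]
      exact Ideal.mul_mem_right _ _ (Ideal.subset_span (Or.inr ⟨i, j, hij, rfl⟩))
  set SF : Finset (Fin n → ℕ) :=
    (Fintype.piFinset fun t => Finset.range (D t)).filter fun f =>
      ∀ i j : Fin n, i < j → f i < d i ∨ f j < d j with hSF
  set toF : ↥SF → (Fin n →₀ ℕ) := fun f => Finsupp.equivFunOnFinite.symm f.1 with htoF
  have htoF_apply : ∀ (f : ↥SF) (t : Fin n), toF f t = f.1 t := fun f t => rfl
  have htoF_inj : Function.Injective toF :=
    fun f g h => Subtype.ext (Finsupp.equivFunOnFinite.symm.injective h)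
  have hStdF : ∀ f : ↥SF, Std (toF f) := by
    intro f
    obtain ⟨h1, h2⟩ := Finset.mem_filter.mp f.2
    rw [Fintype.mem_piFinset] at h1
    constructor
    · intro t
      have := h1 t
      rw [Finset.mem_range] at this
      simpa [htoF_apply] using this
    · intro i j hij
      simpa [htoF_apply] using h2 i j hij
  set π := Ideal.Quotient.mkₐ K J with hπ
  set v : ↥SF → (MvPolynomial (Fin n) K ⧸ J) := fun f => π (monomial (toF f) 1) with hv
  have hindep : LinearIndependent K v := by
    rw [linearIndependent_iff']
    intro s g hg i hi
    set P : MvPolynomial (Fin n) K := ∑ f ∈ s, g f • monomial (toF f) (1 : K) with hP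
    have hπP : π P = 0 := by
      rw [hP, map_sum]
      rw [← hg]
      refine Finset.sum_congr rfl fun f _ => ?_
      exact map_smul π (g f) (monomial (toF f) 1)
    have hPJ : P ∈ J := by
      rwa [hπ, Ideal.Quotient.mkₐ_eq_mk, Ideal.Quotient.eq_zero_iff_mem] at hπP
    have hcoeff : coeff (toF i) P = g i := by
      rw [hP, coeff_sum]
      have hterm : ∀ f ∈ s, coeff (toF i) (g f • monomial (toF f) (1 : K))
          = if f = i then g f else 0 := by
        intro f _
        rw [coeff_smul, coeff_monomial]
        by_cases h : f = i
        · subst h; rw [if_pos rfl, if_pos rfl, smul_eq_mul, mul_one]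
        · rw [if_neg h, if_neg (fun he => h (htoF_inj he)), smul_zero]
      rw [Finset.sum_congr rfl hterm, Finset.sum_ite_eq' s i g, if_pos hi]
    rw [← hcoeff, h_coeff P hPJ (toF i) (hStdF i)]
  have hspan : ⊤ ≤ Submodule.span K (Set.range v) := by
    intro x _
    obtain ⟨p, rfl⟩ := Ideal.Quotient.mkₐ_surjective K J x
    rw [show p = ∑ u ∈ p.support, monomial u (coeff u p) from p.as_sum, map_sum]
    refine Submodule.sum_mem _ fun u _ => ?_
    have hmono : monomial u (coeff u p) = coeff u p • monomial u (1 : K) := by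
      rw [smul_monomial, smul_eq_mul, mul_one]
    rw [hmono, map_smul]
    refine Submodule.smul_mem _ _ ?_
    by_cases hstd : Std u
    · have hmem : Finsupp.equivFunOnFinite u ∈ SF := by
        rw [hSF, Finset.mem_filter, Fintype.mem_piFinset]
        refine ⟨fun t => Finset.mem_range.mpr (hstd.1 t), fun i j hij => hstd.2 i j hij⟩
      have : π (monomial u 1) = v ⟨Finsupp.equivFunOnFinite u, hmem⟩ := by
        rw [hv]
        simp only [htoF]
        rw [Finsupp.equivFunOnFinite.symm_apply_apply u]
      rw [this]
      exact Submodule.subset_span (Set.mem_range_self _)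
    · have : π (monomial u 1) = 0 := by
        rw [hπ, Ideal.Quotient.mkₐ_eq_mk, Ideal.Quotient.eq_zero_iff_mem]
        exact h_not_std u hstd
      rw [this]
      exact Submodule.zero_mem _
  let B : Module.Basis ↥SF K (MvPolynomial (Fin n) K ⧸ J) := Module.Basis.mk hindep hspan
  rw [Module.finrank_eq_card_basis B, Fintype.card_coe]

theorem stmt17 (K : Type*) [Field K] (n a b : ℕ) (hn : 1 ≤ n) (ha : 1 ≤ a) (hb : 1 ≤ b)
    (c : Fin n → ℕ) (hc : ∀ i, c i ≤ a)
    (Q : Matrix (Fin n) (Fin n) ℤ)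
    (hQ : ∀ i j, Q i j = if i = j then ((c i + (n - 1) * b : ℕ) : ℤ) else (b : ℤ))
    (J : Ideal (MvPolynomial (Fin n) K))
    (hJ : J = Ideal.span
      ((Set.range fun t => (X t : MvPolynomial (Fin n) K) ^ (c t + (n - 1) * b)) ∪
        {m | ∃ i j : Fin n, i < j ∧
          m = X i ^ (c i + (n - 2) * b) * X j ^ (c j + (n - 2) * b)})) :
    (Module.finrank K (MvPolynomial (Fin n) K ⧸ J) : ℤ) = Q.det := by
  obtain ⟨m, rfl⟩ : ∃ m, n = m + 1 := ⟨n - 1, by omega⟩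
  have hdD : ∀ t : Fin (m + 1), c t + (m + 1 - 2) * b ≤ c t + (m + 1 - 1) * b := by
    intro t
    have h12 : m + 1 - 2 ≤ m + 1 - 1 := by omega
    exact Nat.add_le_add_left (Nat.mul_le_mul_right b h12) (c t)
  have hcount := finrank_quotient_monomial K (m + 1)
    (fun t => c t + (m + 1 - 1) * b) (fun t => c t + (m + 1 - 2) * b) J hJ
  rw [hcount, count_standard (m + 1) _ _ hdD]
  rcases m with _ | m'
  · -- n = 1
    have hdet : Q.det = Q 0 0 := Matrix.det_fin_one Q
    rw [hdet, hQ 0 0, if_pos rfl]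
    norm_num [Fin.prod_univ_succ, Fin.sum_univ_succ]
  · -- n = m' + 2
    have e1 : m' + 1 + 1 - 1 = m' + 1 := rfl
    have e2 : m' + 1 + 1 - 2 = m' := rfl
    simp only [e1, e2]
    have hQeq : Q = Matrix.of fun i j =>
        (if i = j then ((c i + m' * b : ℕ) : ℤ) + (b : ℤ) else (b : ℤ)) := by
      ext i j
      rw [hQ i j, Matrix.of_apply]
      by_cases h : i = j
      · rw [if_pos h, if_pos h, e1]
        push_cast
        ring
      · rw [if_neg h, if_neg h]
    rw [hQeq, det_diag_add_const (m' + 1 + 1) (fun i => ((c i + m' * b : ℕ) : ℤ)) (b : ℤ)]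
    have e3 : ∀ i : Fin (m' + 1 + 1), c i + (m' + 1) * b - (c i + m' * b) = b := by
      intro i
      rw [add_one_mul, ← Nat.add_assoc, Nat.add_sub_cancel_left]
    have hsum : ∑ i : Fin (m' + 1 + 1), (c i + (m' + 1) * b - (c i + m' * b))
          * ∏ j ∈ Finset.univ.erase i, (c j + m' * b)
        = ∑ i : Fin (m' + 1 + 1), b * ∏ j ∈ Finset.univ.erase i, (c j + m' * b) :=
      Finset.sum_congr rfl fun i _ => by rw [e3 i]
    rw [hsum]
    push_cast
    ring
end
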